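/- Let G ≤ Sym(M) be closed and locally oligomorphic on a countable set M, and let E ⊆ M be finite. Let acl(E) denote the union of the finite orbits of the pointwise stabilizer G_E on M. Then the pointwise stabilizer G_{acl(E)} is locally oligomorphic on M and has no finite orbits on M \ acl(E). -/

import Mathlib

open Pointwise

/-- Topology of pointwise convergence on the symmetric group of a (discrete) set. -/
instance permTop (M : Type*) : TopologicalSpace (Equiv.Perm M) :=
  letI : TopologicalSpace M := ⊥
  TopologicalSpace.induced
    (fun g => ((fun x => g x, fun x => g.symm x) : (M → M) × (M → M))) inferInstance

/-- A topological group is Roelcke precompact if every open neighbourhood `U` of the identity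
admits a finite set `E` with `G = U * E * U`. -/
def RoelckePrecompact (G : Type*) [Group G] [TopologicalSpace G] : Prop :=
  ∀ U : Set G, IsOpen U → (1 : G) ∈ U →
    ∃ E : Finset G, ∀ x : G, ∃ u₁ ∈ U, ∃ e ∈ E, ∃ u₂ ∈ U, x = u₁ * e * u₂

/-- `Y` is a union of finitely many `G`-orbits. -/
def IsFinOrbitUnion {X : Type*} (G : Subgroup (Equiv.Perm X)) (Y : Set X) : Prop :=
  ∃ S : Finset X, Y = ⋃ a ∈ S, MulAction.orbit G a

/-- `G` acts oligomorphically on `Y`: finitely many orbits on `Yⁿ` for all `n`. -/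
def Oligo {X : Type*} (G : Subgroup (Equiv.Perm X)) (Y : Set X) : Prop :=
  ∀ n : ℕ, ∃ T : Finset (Fin n → X), ∀ f : Fin n → X, (∀ i, f i ∈ Y) →
    ∃ t ∈ T, ∃ g ∈ G, ∀ i, g (t i) = f i

/-- `G` is locally oligomorphic on `X`. -/
def LocallyOligo {X : Type*} (G : Subgroup (Equiv.Perm X)) : Prop :=
  ∀ Y : Set X, IsFinOrbitUnion G Y → Oligo G Y

/-- The pointwise stabilizer of `E` in `G ≤ Sym(M)`. -/
def ptStab {M : Type*} (G : Subgroup (Equiv.Perm M)) (E : Set M) : Subgroup (Equiv.Perm M) :=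
  G ⊓ ⨅ a ∈ E, MulAction.stabilizer (Equiv.Perm M) a

/-- The algebraic closure of `E`: the union of the finite orbits of the pointwise
stabilizer of `E` in `G`. -/
def acl {M : Type*} (G : Subgroup (Equiv.Perm M)) (E : Set M) : Set M :=
  {x | (MulAction.orbit (ptStab G E) x).Finite}

/-- The intersection of the open finite-index subgroups of a topological group. -/
def Gcirc (G : Type*) [Group G] [TopologicalSpace G] : Subgroup G :=
  ⨅ U ∈ {U : Subgroup G | IsOpen (U : Set G) ∧ U.index ≠ 0}, U

-- probes

set_option maxHeartbeats 1000000

open MulAction Set Function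

theorem Equiv.Perm.inv_apply_self {α : Type*} (f : Equiv.Perm α) (x : α) : f⁻¹ (f x) = x :=
  f.symm_apply_apply x

theorem Equiv.Perm.apply_inv_self {α : Type*} (f : Equiv.Perm α) (x : α) : f (f⁻¹ x) = x :=
  f.apply_symm_apply x

namespace AclAux

variable {M : Type*}

theorem mem_ptStab {G : Subgroup (Equiv.Perm M)} {D : Set M} {g : Equiv.Perm M} :
    g ∈ ptStab G D ↔ g ∈ G ∧ ∀ a ∈ D, g a = a := by
  simp [ptStab, Subgroup.mem_inf, Subgroup.mem_iInf, MulAction.mem_stabilizer_iff,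
    Equiv.Perm.smul_def]

theorem mem_orbit_sub {L : Subgroup (Equiv.Perm M)} {x y : M} :
    y ∈ orbit L x ↔ ∃ g ∈ L, g x = y := by
  constructor
  · rintro ⟨⟨g, hg⟩, rfl⟩; exact ⟨g, hg, rfl⟩
  · rintro ⟨g, hg, rfl⟩; exact ⟨⟨g, hg⟩, rfl⟩

theorem E_subset_acl {G : Subgroup (Equiv.Perm M)} {E : Set M} : E ⊆ acl G E := by
  intro a ha
  have : orbit (ptStab G E) a ⊆ {a} := by
    rintro y hy
    rcases mem_orbit_sub.mp hy with ⟨g, hg, rfl⟩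
    simp [(mem_ptStab.mp hg).2 a ha]
  exact (Set.finite_singleton a).subset this

end AclAux

namespace AclAux2
open AclAux Classical

variable {M : Type*}

/-- Pairing lemma: pointwise stabilizers of finite sets act oligomorphically on
finite orbit unions of `G`. -/
theorem oligo_ptStab {G : Subgroup (Equiv.Perm M)} (holig : LocallyOligo G)
    {D : Set M} (hD : D.Finite) {W : Set M} (hW : IsFinOrbitUnion G W) :
    Oligo (ptStab G D) W := by
  classical
  obtain ⟨S, rfl⟩ := hW
  set W : Set M := ⋃ a ∈ S, orbit G a with hWdef
  -- enumerate D
  obtain ⟨m, d, hd⟩ : ∃ (m : ℕ) (d : Fin m → M), Set.range d = D := by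
    obtain ⟨m, d, hd⟩ := hD.fin_embedding
    exact ⟨m, d, hd⟩
  -- the bigger orbit union
  set W' : Set M := ⋃ a ∈ S ∪ hD.toFinset, orbit G a with hW'def
  have hWW' : W ⊆ W' := by
    apply Set.biUnion_subset_biUnion_left
    intro a ha; exact Finset.mem_union_left _ ha
  have hDW' : ∀ a ∈ D, a ∈ W' := by
    intro a ha
    apply Set.mem_biUnion (Finset.mem_union_right _ (hD.mem_toFinset.mpr ha))
    exact mem_orbit_self a
  have hW' : IsFinOrbitUnion G W' := ⟨_, rfl⟩
  intro n
  obtain ⟨T₀, hT₀⟩ := holig W' hW' (m + n)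
  refine ⟨T₀.image (fun t => if h : ∃ g : Equiv.Perm M, g ∈ G ∧
      ∀ i : Fin m, g (t (Fin.castAdd n i)) = d i
      then fun j : Fin n => h.choose (t (Fin.natAdd m j))
      else fun j : Fin n => t (Fin.natAdd m j)), ?_⟩
  intro f hf
  have hfw : ∀ i, Fin.append d f i ∈ W' := by
    intro i
    refine Fin.addCases (fun i => ?_) (fun j => ?_) i
    · rw [Fin.append_left]
      refine hDW' _ ?_
      rw [← hd]; exact ⟨i, rfl⟩
    · rw [Fin.append_right]; exact hWW' (hf j)
  obtain ⟨t, ht, g₁, hg₁G, hg₁⟩ := hT₀ (Fin.append d f) hfw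
  have hex : ∃ g : Equiv.Perm M, g ∈ G ∧ ∀ i : Fin m, g (t (Fin.castAdd n i)) = d i := by
    refine ⟨g₁, hg₁G, fun i => ?_⟩
    rw [hg₁ (Fin.castAdd n i), Fin.append_left]
  obtain ⟨hg₀G, hg₀⟩ := hex.choose_spec
  set g₀ := hex.choose
  refine ⟨_, Finset.mem_image_of_mem _ ht, g₁ * g₀⁻¹, ?_, ?_⟩
  · refine mem_ptStab.mpr ⟨mul_mem hg₁G (inv_mem hg₀G), fun a ha => ?_⟩
    obtain ⟨i, rfl⟩ : ∃ i, d i = a := by rwa [← hd, Set.mem_range] at ha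
    have h1 : g₀⁻¹ (d i) = t (Fin.castAdd n i) := by
      rw [← hg₀ i, Equiv.Perm.inv_apply_self]
    rw [Equiv.Perm.mul_apply, h1, hg₁ (Fin.castAdd n i), Fin.append_left]
  · intro j
    simp only [dif_pos hex]
    rw [Equiv.Perm.mul_apply, Equiv.Perm.inv_apply_self, hg₁ (Fin.natAdd m j),
      Fin.append_right]

namespace Chain
open AclAux AclAux2

variable {M : Type*}

/-- The `n`-th finite piece of `acl G E` along an enumeration `e`. -/
def FnS (G : Subgroup (Equiv.Perm M)) (E : Set M) (e : ℕ → M) (n : ℕ) : Set M :=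
  {x | ∃ i ≤ n, e i ∈ acl G E ∧ x ∈ orbit (ptStab G E) (e i)}

/-- The decreasing chain of stabilizers. -/
def HnS (G : Subgroup (Equiv.Perm M)) (E : Set M) (e : ℕ → M) (n : ℕ) :
    Subgroup (Equiv.Perm M) :=
  ptStab G (E ∪ FnS G E e n)

variable {G : Subgroup (Equiv.Perm M)} {E : Set M} {e : ℕ → M}

theorem FnS_finite (n : ℕ) : (FnS G E e n).Finite := by
  have : FnS G E e n ⊆ ⋃ i ∈ Finset.range (n+1),
      (if e i ∈ acl G E then orbit (ptStab G E) (e i) else ∅) := by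
    rintro x ⟨i, hi, hacl, hx⟩
    refine Set.mem_biUnion (Finset.mem_range.mpr (Nat.lt_succ_of_le hi)) ?_
    rw [if_pos hacl]; exact hx
  refine Set.Finite.subset (Set.Finite.biUnion (Finset.range (n+1)).finite_toSet
    (fun i _ => ?_)) this
  split_ifs with h
  · exact h
  · exact Set.finite_empty

theorem FnS_mono {n m : ℕ} (h : n ≤ m) : FnS G E e n ⊆ FnS G E e m := by
  rintro x ⟨i, hi, hx⟩; exact ⟨i, hi.trans h, hx⟩

theorem FnS_subset_acl (n : ℕ) : FnS G E e n ⊆ acl G E := by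
  rintro x ⟨i, _, hacl, hx⟩
  have : orbit (ptStab G E) x = orbit (ptStab G E) (e i) :=
    MulAction.orbit_eq_iff.mpr hx
  show (orbit (ptStab G E) x).Finite
  rw [this]; exact hacl

theorem FnS_inv {h : Equiv.Perm M} (hh : h ∈ ptStab G E) {x : M} (hx : x ∈ FnS G E e n) :
    h x ∈ FnS G E e n := by
  obtain ⟨i, hi, hacl, hx⟩ := hx
  refine ⟨i, hi, hacl, ?_⟩
  rcases mem_orbit_sub.mp hx with ⟨g, hg, rfl⟩
  exact mem_orbit_sub.mpr ⟨h * g, mul_mem hh hg, rfl⟩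

theorem HnS_anti {n m : ℕ} (h : n ≤ m) : HnS G E e m ≤ HnS G E e n := by
  intro g hg
  rw [HnS, mem_ptStab] at hg ⊢
  exact ⟨hg.1, fun a ha => hg.2 a (ha.imp id (fun hx => FnS_mono h hx))⟩

theorem HnS_le_H (n : ℕ) : HnS G E e n ≤ ptStab G E := by
  intro g hg
  rw [HnS, mem_ptStab] at hg
  exact mem_ptStab.mpr ⟨hg.1, fun a ha => hg.2 a (Or.inl ha)⟩

theorem HnS_le_G (n : ℕ) : HnS G E e n ≤ G := fun g hg => (mem_ptStab.mp hg).1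

theorem fix_of_mem_H {h : Equiv.Perm M} (hh : h ∈ ptStab G E) {a : M} (ha : a ∈ E) :
    h a = a := (mem_ptStab.mp hh).2 a ha

theorem conj_mem_HnS {h g : Equiv.Perm M} (hh : h ∈ ptStab G E)
    (hg : g ∈ HnS G E e n) : h * g * h⁻¹ ∈ HnS G E e n := by
  have hhinv : h⁻¹ ∈ ptStab G E := inv_mem hh
  rw [HnS, mem_ptStab] at hg ⊢
  refine ⟨mul_mem (mul_mem (mem_ptStab.mp hh).1 hg.1) (mem_ptStab.mp hhinv).1,
    fun a ha => ?_⟩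
  rcases ha with ha | ha
  · have h1 : h⁻¹ a = a := fix_of_mem_H hhinv ha
    simp only [Equiv.Perm.mul_apply, h1, hg.2 a (Or.inl ha), fix_of_mem_H hh ha]
  · have h1 : h⁻¹ a ∈ FnS G E e n := FnS_inv hhinv ha
    simp only [Equiv.Perm.mul_apply, hg.2 _ (Or.inr h1)]
    have : h (h⁻¹ a) = a := Equiv.Perm.apply_inv_self h a
    exact this

theorem K_iff (he : Function.Surjective e) {g : Equiv.Perm M} :
    g ∈ ptStab G (acl G E) ↔ ∀ n, g ∈ HnS G E e n := by
  constructor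
  · intro hg n
    rw [mem_ptStab] at hg
    refine mem_ptStab.mpr ⟨hg.1, fun a ha => ?_⟩
    rcases ha with ha | ha
    · exact hg.2 a (E_subset_acl ha)
    · exact hg.2 a (FnS_subset_acl n ha)
  · intro hg
    refine mem_ptStab.mpr ⟨HnS_le_G 0 (hg 0), fun a ha => ?_⟩
    obtain ⟨i, rfl⟩ := he a
    have : e i ∈ FnS G E e i := ⟨i, le_refl i, ha, MulAction.mem_orbit_self _⟩
    exact (mem_ptStab.mp (hg i)).2 _ (Or.inr this)

end Chain

namespace Chain
open AclAux AclAux2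

variable {M : Type*} {G : Subgroup (Equiv.Perm M)} {E : Set M} {e : ℕ → M}

theorem stab_lemma (holig : LocallyOligo G) (hE : E.Finite)
    {W : Set M} (hW : IsFinOrbitUnion G W) (l : ℕ) :
    ∃ N : ℕ, ∀ n, N ≤ n → ∀ u v : Fin l → M, (∀ i, u i ∈ W) → (∀ i, v i ∈ W) →
      (∃ g ∈ HnS G E e N, ∀ i, g (u i) = v i) →
      ∃ g ∈ HnS G E e n, ∀ i, g (u i) = v i := by
  classical
  obtain ⟨T₂, hT₂⟩ := oligo_ptStab holig hE hW (l + l)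
  set P : ℕ → (Fin (l + l) → M) → Prop := fun m t =>
    ∃ h ∈ ptStab G E, ∃ g ∈ HnS G E e m,
      ∀ i : Fin l, g (h (t (Fin.castAdd l i))) = h (t (Fin.natAdd l i)) with hP
  set S : ℕ → Finset (Fin (l + l) → M) := fun m => T₂.filter (P m) with hS
  have Santi : ∀ {m m'}, m ≤ m' → S m' ⊆ S m := by
    intro m m' hmm'
    intro t ht
    rw [Finset.mem_filter] at ht ⊢
    obtain ⟨ht, h, hh, g, hg, hgt⟩ := ht
    exact ⟨ht, h, hh, g, HnS_anti hmm' hg, hgt⟩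
  obtain ⟨N, hN⟩ : ∃ N, (S N).card = sInf (Set.range fun m => (S m).card) :=
    Nat.sInf_mem (Set.range_nonempty _)
  refine ⟨N, fun n hn u v hu hv ⟨g₀, hg₀, hg₀uv⟩ => ?_⟩
  have hSeq : S n = S N := by
    refine Finset.eq_of_subset_of_card_le (Santi hn) ?_
    rw [hN]
    exact Nat.sInf_le ⟨n, rfl⟩
  -- the appended tuple
  have hw : ∀ i, Fin.append u v i ∈ W := by
    intro i
    refine Fin.addCases (fun i => ?_) (fun j => ?_) i
    · rw [Fin.append_left]; exact hu i
    · rw [Fin.append_right]; exact hv j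
  obtain ⟨t, ht, h, hh, hht⟩ := hT₂ (Fin.append u v) hw
  have htSN : t ∈ S N := by
    refine Finset.mem_filter.mpr ⟨ht, h, hh, g₀, hg₀, fun i => ?_⟩
    rw [hht (Fin.castAdd l i), hht (Fin.natAdd l i), Fin.append_left, Fin.append_right]
    exact hg₀uv i
  have htSn : t ∈ S n := hSeq ▸ htSN
  obtain ⟨-, h', hh', g₁, hg₁, hg₁t⟩ := Finset.mem_filter.mp htSn
  set c : Equiv.Perm M := h * h'⁻¹ with hc
  have hcH : c ∈ ptStab G E := mul_mem hh (inv_mem hh')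
  refine ⟨c * g₁ * c⁻¹, conj_mem_HnS hcH hg₁, fun i => ?_⟩
  have h1 : c⁻¹ (u i) = h' (t (Fin.castAdd l i)) := by
    have : u i = h (t (Fin.castAdd l i)) := by
      rw [hht (Fin.castAdd l i), Fin.append_left]
    rw [this, hc]
    simp [Equiv.Perm.mul_apply]
  calc (c * g₁ * c⁻¹) (u i) = c (g₁ (c⁻¹ (u i))) := by simp [Equiv.Perm.mul_apply]
    _ = c (h' (t (Fin.natAdd l i))) := by rw [h1, hg₁t i]
    _ = v i := by
        rw [hc]
        simp only [Equiv.Perm.mul_apply, Equiv.Perm.inv_apply_self]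
        rw [hht (Fin.natAdd l i), Fin.append_right]

namespace Chain
open AclAux AclAux2

variable {M : Type*}

/-- The compatibility relation for finite partial maps. -/
def Rl (G : Subgroup (Equiv.Perm M)) (E : Set M) (e : ℕ → M) (L : List (M × M)) : Prop :=
  ∀ n, ∃ g ∈ HnS G E e n, ∀ pq ∈ L, g pq.1 = pq.2

variable {G : Subgroup (Equiv.Perm M)} {E : Set M} {e : ℕ → M}

theorem rl_sym {L : List (M × M)} (hL : Rl G E e L) : Rl G E e (L.map Prod.swap) := by
  intro n
  obtain ⟨g, hg, hgL⟩ := hL n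
  refine ⟨g⁻¹, inv_mem hg, fun pq hpq => ?_⟩
  obtain ⟨ab, hab, rfl⟩ := List.mem_map.mp hpq
  show g⁻¹ ab.2 = ab.1
  rw [← hgL ab hab, Equiv.Perm.inv_apply_self]

theorem swap_swap_list (L : List (M × M)) : (L.map Prod.swap).map Prod.swap = L := by
  rw [List.map_map]
  have : Prod.swap ∘ Prod.swap = (id : M × M → M × M) := funext fun x => Prod.swap_swap x
  rw [this, List.map_id]

theorem rl_forth (holig : LocallyOligo G) (hE : E.Finite) (he : Function.Surjective e)
    {L : List (M × M)} (hL : Rl G E e L) (p : M) :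
    ∃ q, Rl G E e ((p, q) :: L) ∧ (p ∈ acl G E → q = p) := by
  classical
  by_cases hp : p ∈ acl G E
  · refine ⟨p, fun n => ?_, fun _ => rfl⟩
    obtain ⟨i, hei⟩ := he p
    obtain ⟨g, hg, hgL⟩ := hL (max n i)
    refine ⟨g, HnS_anti (le_max_left n i) hg, fun pq hpq => ?_⟩
    rcases List.mem_cons.mp hpq with rfl | hpq
    · show g p = p
      have hpF : p ∈ FnS G E e (max n i) := by
        refine ⟨i, le_max_right n i, ?_, ?_⟩
        · rw [hei]; exact hp
        · rw [hei]; exact MulAction.mem_orbit_self p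
      exact (mem_ptStab.mp hg).2 p (Or.inr hpF)
    · exact hgL pq hpq
  · -- use the stabilization lemma
    set l := L.length with hl
    set Fset : Finset M := insert p (L.map Prod.fst).toFinset with hFset
    set W : Set M := ⋃ a ∈ Fset, MulAction.orbit G a with hW
    have hWfin : IsFinOrbitUnion G W := ⟨Fset, rfl⟩
    obtain ⟨N, hN⟩ := stab_lemma (e := e) holig hE hWfin (l + 1)
    obtain ⟨gN, hgN, hgNL⟩ := hL N
    refine ⟨gN p, fun n => ?_, fun h => absurd h hp⟩
    rcases le_total n N with hn | hn
    · obtain ⟨g, hg, hgL⟩ := hL N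
      refine ⟨gN, HnS_anti hn hgN, fun pq hpq => ?_⟩
      rcases List.mem_cons.mp hpq with rfl | hpq
      · rfl
      · exact hgNL pq hpq
    · set u : Fin (l + 1) → M := Fin.cons p (fun j => (L.get j).1) with hu
      set v : Fin (l + 1) → M := Fin.cons (gN p) (fun j => (L.get j).2) with hv
      have memW : ∀ a ∈ Fset, ∀ b ∈ MulAction.orbit G a, b ∈ W :=
        fun a ha b hb => Set.mem_biUnion ha hb
      have hpW : ∀ a ∈ Fset, a ∈ W := fun a ha => memW a ha a (MulAction.mem_orbit_self a)
      have hufst : ∀ j : Fin l, (L.get j).1 ∈ Fset := by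
        intro j
        refine Finset.mem_insert_of_mem (List.mem_toFinset.mpr ?_)
        exact List.mem_map.mpr ⟨L.get j, L.get_mem _, rfl⟩
      have hgNv : ∀ j : Fin l, (L.get j).2 = gN ((L.get j).1) :=
        fun j => (hgNL (L.get j) (L.get_mem _)).symm
      have hu' : ∀ i, u i ∈ W := by
        intro i
        refine Fin.cases ?_ (fun j => ?_) i
        · rw [hu, Fin.cons_zero]; exact hpW p (Finset.mem_insert_self _ _)
        · rw [hu, Fin.cons_succ]; exact hpW _ (hufst j)
      have horb : ∀ x ∈ Fset, gN x ∈ W := by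
        intro x hx
        exact memW x hx _ (mem_orbit_sub.mpr ⟨gN, HnS_le_G N hgN, rfl⟩)
      have hv' : ∀ i, v i ∈ W := by
        intro i
        refine Fin.cases ?_ (fun j => ?_) i
        · rw [hv, Fin.cons_zero]; exact horb p (Finset.mem_insert_self _ _)
        · rw [hv, Fin.cons_succ, hgNv j]; exact horb _ (hufst j)
      have hprem : ∃ g ∈ HnS G E e N, ∀ i, g (u i) = v i := by
        refine ⟨gN, hgN, fun i => ?_⟩
        refine Fin.cases ?_ (fun j => ?_) i
        · rw [hu, hv, Fin.cons_zero, Fin.cons_zero]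
        · rw [hu, hv, Fin.cons_succ, Fin.cons_succ, hgNv j]
      obtain ⟨g, hg, hguv⟩ := hN n hn u v hu' hv' hprem
      refine ⟨g, hg, fun pq hpq => ?_⟩
      rcases List.mem_cons.mp hpq with rfl | hpq
      · have := hguv 0
        rwa [hu, hv, Fin.cons_zero, Fin.cons_zero] at this
      · obtain ⟨j, rfl⟩ := List.mem_iff_get.mp hpq
        have := hguv j.succ
        rwa [hu, hv, Fin.cons_succ, Fin.cons_succ] at this

theorem rl_back (holig : LocallyOligo G) (hE : E.Finite) (he : Function.Surjective e)
    {L : List (M × M)} (hL : Rl G E e L) (r : M) :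
    ∃ p, Rl G E e ((p, r) :: L) ∧ (r ∈ acl G E → p = r) := by
  obtain ⟨q, hq, hqa⟩ := rl_forth holig hE he (rl_sym hL) r
  refine ⟨q, ?_, hqa⟩
  have := rl_sym hq
  rw [List.map_cons, swap_swap_list] at this
  exact this

section BF
variable (holig : LocallyOligo G) (hE : E.Finite) (he : Function.Surjective e)

noncomputable def forthQ {L : List (M × M)} (hL : Rl G E e L) (p : M) : M :=
  (rl_forth holig hE he hL p).choose

theorem forthQ_spec {L : List (M × M)} (hL : Rl G E e L) (p : M) :
    Rl G E e ((p, forthQ holig hE he hL p) :: L) ∧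
      (p ∈ acl G E → forthQ holig hE he hL p = p) :=
  (rl_forth holig hE he hL p).choose_spec

noncomputable def backP {L : List (M × M)} (hL : Rl G E e L) (r : M) : M :=
  (rl_back holig hE he hL r).choose

theorem backP_spec {L : List (M × M)} (hL : Rl G E e L) (r : M) :
    Rl G E e ((backP holig hE he hL r, r) :: L) ∧
      (r ∈ acl G E → backP holig hE he hL r = r) :=
  (rl_back holig hE he hL r).choose_spec

variable (L₀ : List (M × M)) (h₀ : Rl G E e L₀)

noncomputable def chainD : ℕ → {L : List (M × M) // Rl G E e L}
  | 0 => ⟨L₀, h₀⟩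
  | (i+1) =>
    ⟨_, (backP_spec holig hE he
      ((forthQ_spec holig hE he (chainD i).2 (e i)).1) (e i)).1⟩

noncomputable def QD (i : ℕ) : M :=
  forthQ holig hE he (chainD holig hE he L₀ h₀ i).2 (e i)

noncomputable def PD (i : ℕ) : M :=
  backP holig hE he
    ((forthQ_spec holig hE he (chainD holig hE he L₀ h₀ i).2 (e i)).1) (e i)

theorem chain_succ (i : ℕ) :
    (chainD holig hE he L₀ h₀ (i+1)).1 =
      (PD holig hE he L₀ h₀ i, e i) :: (e i, QD holig hE he L₀ h₀ i) ::
        (chainD holig hE he L₀ h₀ i).1 := rfl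

theorem QD_acl {i : ℕ} (h : e i ∈ acl G E) : QD holig hE he L₀ h₀ i = e i :=
  (forthQ_spec holig hE he (chainD holig hE he L₀ h₀ i).2 (e i)).2 h

theorem mem_chain_mono {i j : ℕ} (hij : i ≤ j) {pq : M × M}
    (h : pq ∈ (chainD holig hE he L₀ h₀ i).1) : pq ∈ (chainD holig hE he L₀ h₀ j).1 := by
  induction j with
  | zero => rwa [Nat.le_zero.mp hij] at h
  | succ j ih =>
    rcases Nat.le_succ_iff.mp hij with hij' | rfl
    · rw [chain_succ]
      exact List.mem_cons_of_mem _ (List.mem_cons_of_mem _ (ih hij'))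
    · exact h

end BF

theorem keyC (hclosed : IsClosed (G : Set (Equiv.Perm M)))
    (holig : LocallyOligo G) (hE : E.Finite) (he : Function.Surjective e)
    (L₀ : List (M × M)) (h₀ : Rl G E e L₀) :
    ∃ k : Equiv.Perm M, k ∈ ptStab G (acl G E) ∧ ∀ pq ∈ L₀, k pq.1 = pq.2 := by
  classical
  set C := chainD holig hE he L₀ h₀ with hC
  have hQ : ∀ i, (e i, QD holig hE he L₀ h₀ i) ∈ (C (i+1)).1 := by
    intro i
    rw [hC, chain_succ]
    exact List.mem_cons_of_mem _ List.mem_cons_self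
  have hP : ∀ i, (PD holig hE he L₀ h₀ i, e i) ∈ (C (i+1)).1 := by
    intro i
    rw [hC, chain_succ]
    exact List.mem_cons_self
  have CONS : ∀ {i j : ℕ} {p q q' : M}, (p, q) ∈ (C i).1 → (p, q') ∈ (C j).1 → q = q' := by
    intro i j p q q' h1 h2
    obtain ⟨g, -, hg⟩ := (C (max i j)).2 0
    have e1 := hg _ (mem_chain_mono holig hE he L₀ h₀ (le_max_left i j) h1)
    have e2 := hg _ (mem_chain_mono holig hE he L₀ h₀ (le_max_right i j) h2)
    simp only at e1 e2
    rw [← e1, ← e2]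
  have INJ : ∀ {i j : ℕ} {p p' q : M}, (p, q) ∈ (C i).1 → (p', q) ∈ (C j).1 → p = p' := by
    intro i j p p' q h1 h2
    obtain ⟨g, -, hg⟩ := (C (max i j)).2 0
    have e1 := hg _ (mem_chain_mono holig hE he L₀ h₀ (le_max_left i j) h1)
    have e2 := hg _ (mem_chain_mono holig hE he L₀ h₀ (le_max_right i j) h2)
    simp only at e1 e2
    exact g.injective (by rw [e1, e2])
  set idx : M → ℕ := fun p => (he p).choose with hidx
  have hidxe : ∀ p, e (idx p) = p := fun p => (he p).choose_spec
  set kf : M → M := fun p => QD holig hE he L₀ h₀ (idx p) with hkf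
  set kb : M → M := fun r => PD holig hE he L₀ h₀ (idx r) with hkb
  have hkfC : ∀ p, (p, kf p) ∈ (C (idx p + 1)).1 := by
    intro p
    have := hQ (idx p)
    rwa [hidxe p] at this
  have hkbC : ∀ r, (kb r, r) ∈ (C (idx r + 1)).1 := by
    intro r
    have := hP (idx r)
    rwa [hidxe r] at this
  have hleft : Function.LeftInverse kb kf := fun p => INJ (hkbC (kf p)) (hkfC p)
  have hright : Function.RightInverse kb kf := fun r => CONS (hkfC (kb r)) (hkbC r)
  set kE : Equiv.Perm M := ⟨kf, kb, hleft, hright⟩ with hkE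
  have hpair : ∀ {i : ℕ} {pq : M × M}, pq ∈ (C i).1 → kE pq.1 = pq.2 := by
    intro i pq h
    exact CONS (hkfC pq.1) h
  have haclfix : ∀ a ∈ acl G E, kE a = a := by
    intro a ha
    show kf a = a
    rw [hkf]
    simp only
    rw [QD_acl]
    · exact hidxe a
    · rw [hidxe a]; exact ha
  have hGmem : kE ∈ G := by
    have hcl : kE ∈ closure (G : Set (Equiv.Perm M)) := by
      rw [mem_closure_iff]
      intro o ho hko
      letI : TopologicalSpace M := ⊥
      obtain ⟨V, hV, rfl⟩ := isOpen_induced_iff.mp ho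
      set ι : Equiv.Perm M → (M → M) × (M → M) :=
        fun g => ((fun x => g x, fun x => g.symm x)) with hι
      have hkV : ι kE ∈ V := hko
      obtain ⟨U₁, U₂, hU₁, hU₂, hk1, hk2, hUV⟩ :=
        isOpen_prod_iff.mp hV _ _ hkV
      obtain ⟨I₁, u₁, hu₁, hU₁sub⟩ := isOpen_pi_iff.mp hU₁ _ hk1
      obtain ⟨I₂, u₂, hu₂, hU₂sub⟩ := isOpen_pi_iff.mp hU₂ _ hk2
      set J : ℕ := (I₁.sup fun p => idx p + 1) ⊔ (I₂.sup fun r => idx r + 1) with hJ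
      obtain ⟨g, hgH, hg⟩ := (C J).2 0
      have hgG : g ∈ G := HnS_le_G 0 hgH
      refine ⟨g, ?_, hgG⟩
      show ι g ∈ V
      refine hUV ?_
      constructor
      · refine hU₁sub ?_
        intro p hp
        have hmem : (p, kf p) ∈ (C J).1 :=
          mem_chain_mono holig hE he L₀ h₀
            (le_trans (Finset.le_sup hp) le_sup_left) (hkfC p)
        have : g p = kf p := hg _ hmem
        show g p ∈ u₁ p
        rw [this]
        exact (hu₁ p hp).2
      · refine hU₂sub ?_
        intro r hr
        have hmem : (kb r, r) ∈ (C J).1 :=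
          mem_chain_mono holig hE he L₀ h₀
            (le_trans (Finset.le_sup hr) le_sup_right) (hkbC r)
        have hgr : g (kb r) = r := hg _ hmem
        have : g.symm r = kb r := (Equiv.symm_apply_eq g).mpr hgr.symm
        show g.symm r ∈ u₂ r
        rw [this]
        exact (hu₂ r hr).2
    rwa [hclosed.closure_eq] at hcl
  exact ⟨kE, mem_ptStab.mpr ⟨hGmem, haclfix⟩,
    fun pq hpq => hpair (i := 0) (show pq ∈ (C 0).1 from hpq)⟩

theorem orbit_sub_orbit {L L' : Subgroup (Equiv.Perm M)} (h : L ≤ L') (x : M) :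
    MulAction.orbit L x ⊆ MulAction.orbit L' x := by
  intro y hy
  obtain ⟨g, hg, rfl⟩ := mem_orbit_sub.mp hy
  exact mem_orbit_sub.mpr ⟨g, h hg, rfl⟩

theorem fi_step (L : Subgroup (Equiv.Perm M)) (a : M) (ha : (MulAction.orbit L a).Finite)
    (x : M) (hx : (MulAction.orbit ((L ⊓ MulAction.stabilizer (Equiv.Perm M) a : Subgroup (Equiv.Perm M))) x).Finite) :
    (MulAction.orbit L x).Finite := by
  classical
  set σ : M → Equiv.Perm M := fun b =>
    if h : ∃ g : Equiv.Perm M, g ∈ L ∧ g a = b then h.choose else 1 with hσ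
  have hcov : MulAction.orbit L x ⊆
      ⋃ b ∈ MulAction.orbit L a, (σ b) '' MulAction.orbit
        ((L ⊓ MulAction.stabilizer (Equiv.Perm M) a : Subgroup (Equiv.Perm M))) x := by
    intro y hy
    obtain ⟨g, hg, rfl⟩ := mem_orbit_sub.mp hy
    have hb : ∃ g' : Equiv.Perm M, g' ∈ L ∧ g' a = g a := ⟨g, hg, rfl⟩
    refine Set.mem_biUnion (mem_orbit_sub.mpr ⟨g, hg, rfl⟩) ?_
    obtain ⟨hσL, hσa⟩ := hb.choose_spec
    have hσval : σ (g a) = hb.choose := by rw [hσ]; exact dif_pos hb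
    refine ⟨(hb.choose⁻¹ * g) x, ?_, ?_⟩
    · refine mem_orbit_sub.mpr ⟨hb.choose⁻¹ * g, ?_, rfl⟩
      refine Subgroup.mem_inf.mpr ⟨mul_mem (inv_mem hσL) hg, ?_⟩
      rw [MulAction.mem_stabilizer_iff]
      show (hb.choose⁻¹ * g) • a = a
      rw [Equiv.Perm.smul_def, Equiv.Perm.mul_apply]
      have h2 : hb.choose⁻¹ (hb.choose a) = hb.choose⁻¹ (g a) := congrArg _ hσa
      rw [Equiv.Perm.inv_apply_self] at h2
      exact h2.symm
    · rw [hσval, Equiv.Perm.mul_apply, Equiv.Perm.apply_inv_self]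
  refine Set.Finite.subset (Set.Finite.biUnion ha fun b _ => hx.image _) hcov

theorem fi_fin {F : Set M} (hF : F.Finite) :
    ∀ L : Subgroup (Equiv.Perm M), ∀ x : M, (∀ b ∈ F, (MulAction.orbit L b).Finite) →
      (MulAction.orbit ((L ⊓ ⨅ b ∈ F, MulAction.stabilizer (Equiv.Perm M) b : Subgroup (Equiv.Perm M))) x).Finite →
      (MulAction.orbit L x).Finite := by
  refine Set.Finite.induction_on F hF ?_ ?_
  · intro L x _ hfin
    have heq : (L ⊓ ⨅ b ∈ (∅ : Set M), MulAction.stabilizer (Equiv.Perm M) b) = L := by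
      rw [iInf_emptyset, inf_top_eq]
    rwa [heq] at hfin
  · intro a s _ _ ih L x hall hfin
    have heq : (L ⊓ ⨅ b ∈ insert a s, MulAction.stabilizer (Equiv.Perm M) b) =
        ((L ⊓ MulAction.stabilizer (Equiv.Perm M) a) ⊓
          ⨅ b ∈ s, MulAction.stabilizer (Equiv.Perm M) b) := by
      ext g
      simp only [Subgroup.mem_inf, Subgroup.mem_iInf, Set.mem_insert_iff]
      constructor
      · rintro ⟨hg, hstab⟩
        exact ⟨⟨hg, hstab a (Or.inl rfl)⟩, fun b hb => hstab b (Or.inr hb)⟩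
      · rintro ⟨⟨hg, hstaba⟩, hstab⟩
        refine ⟨hg, fun b hb => ?_⟩
        rcases hb with rfl | hb
        · exact hstaba
        · exact hstab b hb
    rw [heq] at hfin
    have hstep := ih (L ⊓ MulAction.stabilizer (Equiv.Perm M) a) x
      (fun b hb => ((hall b (Set.mem_insert_of_mem a hb)).subset
        (orbit_sub_orbit inf_le_left b))) hfin
    exact fi_step L a (hall a (Set.mem_insert a s)) x hstep

theorem HnS_eq_inf {G : Subgroup (Equiv.Perm M)} {E : Set M} {e : ℕ → M} (n : ℕ) :
    HnS G E e n = ((ptStab G E ⊓ ⨅ b ∈ FnS G E e n,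
      MulAction.stabilizer (Equiv.Perm M) b : Subgroup (Equiv.Perm M))) := by
  ext g
  rw [HnS, mem_ptStab, Subgroup.mem_inf, mem_ptStab]
  simp only [Subgroup.mem_iInf, MulAction.mem_stabilizer_iff, Equiv.Perm.smul_def,
    Set.mem_union]
  constructor
  · rintro ⟨hg, hfix⟩
    exact ⟨⟨hg, fun a ha => hfix a (Or.inl ha)⟩, fun b hb => hfix b (Or.inr hb)⟩
  · rintro ⟨⟨hg, hE'⟩, hF⟩
    refine ⟨hg, fun a ha => ?_⟩
    rcases ha with ha | ha
    · exact hE' a ha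
    · exact hF a ha

theorem main_thm {M : Type*} [Countable M] (G : Subgroup (Equiv.Perm M))
    (hclosed : IsClosed (G : Set (Equiv.Perm M))) (holig : LocallyOligo G)
    (E : Set M) (hE : E.Finite) :
    LocallyOligo (ptStab G (acl G E)) ∧
      ∀ x : M, x ∉ acl G E → (MulAction.orbit (ptStab G (acl G E)) x).Infinite := by
  classical
  rcases isEmpty_or_nonempty M with hM | hM
  · constructor
    · intro Y hY n
      rcases n with _ | n
      · refine ⟨{fun i => i.elim0}, fun f _ => ?_⟩
        refine ⟨fun i => i.elim0, Finset.mem_singleton_self _, 1, one_mem _, fun i => i.elim0⟩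
      · exact ⟨∅, fun f _ => (hM.elim (f 0))⟩
    · exact fun x _ => (hM.elim x)
  · obtain ⟨e, he⟩ := exists_surjective_nat M
    have hKle : ptStab G (acl G E) ≤ G := fun g hg => (mem_ptStab.mp hg).1
    constructor
    · -- local oligomorphy of the stabilizer of the algebraic closure
      intro Y hY n
      obtain ⟨S, hYS⟩ := hY
      set W : Set M := ⋃ a ∈ S, MulAction.orbit G a with hW
      have hWfin : IsFinOrbitUnion G W := ⟨S, rfl⟩
      have hYW : Y ⊆ W := by
        rw [hYS]
        refine Set.iUnion₂_mono fun a _ => ?_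
        exact orbit_sub_orbit hKle a
      obtain ⟨N, hN⟩ := stab_lemma (e := e) holig hE hWfin n
      obtain ⟨T, hT⟩ := oligo_ptStab holig (hE.union (FnS_finite (e := e) N)) hWfin n
      refine ⟨T.image (fun t => if h : ∃ g : Equiv.Perm M, g ∈ HnS G E e N ∧
          ∀ i, g (t i) ∈ W then fun i => h.choose (t i) else t), fun f hf => ?_⟩
      have hfW : ∀ i, f i ∈ W := fun i => hYW (hf i)
      obtain ⟨t, ht, g, hgN, hgt⟩ := hT f hfW
      have hgN' : g ∈ HnS G E e N := hgN
      have hex : ∃ g : Equiv.Perm M, g ∈ HnS G E e N ∧ ∀ i, g (t i) ∈ W :=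
        ⟨g, hgN', fun i => (hgt i).symm ▸ hfW i⟩
      obtain ⟨hg₀N, hg₀W⟩ := hex.choose_spec
      set g₀ := hex.choose with hg₀
      set t' : Fin n → M := fun i => g₀ (t i) with ht'
      have ht'T : t' ∈ T.image (fun t => if h : ∃ g : Equiv.Perm M, g ∈ HnS G E e N ∧
          ∀ i, g (t i) ∈ W then fun i => h.choose (t i) else t) := by
        refine Finset.mem_image.mpr ⟨t, ht, ?_⟩
        rw [dif_pos hex, ht', hg₀]
      have hrel : ∀ m, ∃ gm ∈ HnS G E e m, ∀ i, gm (t' i) = f i := by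
        intro m
        have hgg : g * g₀⁻¹ ∈ HnS G E e N := mul_mem hgN' (inv_mem hg₀N)
        have hggt : ∀ i, (g * g₀⁻¹) (t' i) = f i := by
          intro i
          rw [ht']
          simp only [Equiv.Perm.mul_apply, Equiv.Perm.inv_apply_self]
          exact hgt i
        rcases le_total m N with hm | hm
        · exact ⟨g * g₀⁻¹, HnS_anti hm hgg, hggt⟩
        · exact hN m hm t' f (fun i => hg₀W i) hfW ⟨g * g₀⁻¹, hgg, hggt⟩
      have h₀ : Rl G E e (List.ofFn fun i => (t' i, f i)) := by
        intro m
        obtain ⟨gm, hgm, hgmt⟩ := hrel m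
        refine ⟨gm, hgm, fun pq hpq => ?_⟩
        obtain ⟨i, rfl⟩ := List.mem_ofFn.mp hpq
        exact hgmt i
      obtain ⟨k, hkK, hk⟩ := keyC hclosed holig hE he _ h₀
      refine ⟨t', ht'T, k, hkK, fun i => ?_⟩
      exact hk _ (List.mem_ofFn.mpr ⟨i, rfl⟩)
    · -- no finite orbits outside the algebraic closure
      intro x hx hfin
      set W : Set M := MulAction.orbit G x with hW
      have hWfin : IsFinOrbitUnion G W := by
        refine ⟨{x}, ?_⟩
        simp [hW]
      obtain ⟨N, hN⟩ := stab_lemma (e := e) holig hE hWfin 1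
      have hsub : MulAction.orbit (HnS G E e N) x ⊆
          MulAction.orbit (ptStab G (acl G E)) x := by
        intro y hy
        obtain ⟨g, hg, rfl⟩ := mem_orbit_sub.mp hy
        have hrel : ∀ m, ∃ gm ∈ HnS G E e m, gm x = g x := by
          intro m
          rcases le_total m N with hm | hm
          · exact ⟨g, HnS_anti hm hg, rfl⟩
          · obtain ⟨gm, hgm, hgmx⟩ := hN m hm (fun _ => x) (fun _ => g x)
              (fun _ => MulAction.mem_orbit_self x)
              (fun _ => mem_orbit_sub.mpr ⟨g, HnS_le_G N hg, rfl⟩)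
              ⟨g, hg, fun _ => rfl⟩
            exact ⟨gm, hgm, hgmx 0⟩
        have h₀ : Rl G E e [(x, g x)] := by
          intro m
          obtain ⟨gm, hgm, hgmx⟩ := hrel m
          refine ⟨gm, hgm, fun pq hpq => ?_⟩
          rw [List.mem_singleton] at hpq
          rw [hpq]
          exact hgmx
        obtain ⟨k, hkK, hk⟩ := keyC hclosed holig hE he _ h₀
        exact mem_orbit_sub.mpr ⟨k, hkK, hk (x, g x) (List.mem_singleton_self _)⟩
      have hNfin : (MulAction.orbit (HnS G E e N) x).Finite := hfin.subset hsub
      rw [HnS_eq_inf] at hNfin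
      have : (MulAction.orbit (ptStab G E) x).Finite := by
        refine fi_fin (FnS_finite (e := e) N) (ptStab G E) x ?_ hNfin
        intro b hb
        exact FnS_subset_acl N hb
      exact hx this

end Chain
end Chain
end AclAux2


/-- If `G ≤ Sym(M)` is closed and locally oligomorphic and `E ⊆ M` is finite, then the
pointwise stabilizer of `acl(E)` is locally oligomorphic and has no finite orbits outside
`acl(E)`. -/
theorem ptStab_acl_locallyOligo {M : Type*} [Countable M] (G : Subgroup (Equiv.Perm M))
    (hclosed : IsClosed (G : Set (Equiv.Perm M))) (holig : LocallyOligo G)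
    (E : Set M) (hE : E.Finite) :
    LocallyOligo (ptStab G (acl G E)) ∧
      ∀ x : M, x ∉ acl G E → (MulAction.orbit (ptStab G (acl G E)) x).Infinite := by
  exact AclAux2.Chain.Chain.main_thm G hclosed holig E hE
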